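/- arXiv:2604.25269 — 2 statements merged into one kernel-verified Lean document; each statement's English description precedes it below -/
import Mathlib

section
/- Let ℓ̂_1, …, ℓ̂_T be any sequence of (possibly random) loss-estimate vectors in ℝ^d, let Z̃ ∈ ℝ^d have i.i.d. standard exponential components and let S̃ ⊆ S be a nonempty random decision set, with (Z̃, S̃) independent of the estimates. Define the hypothetical forecaster Ṽ_t = argmin_{v ∈ S̃} vᵀ(η Σ_{s=1}^t ℓ̂_s − Z̃) for η > 0. Then for any fixed policy π, E[ Σ_{t=1}^T (Ṽ_t − π(S̃))ᵀ ℓ̂_t ] ≤ m(log d + 1)/η. -/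
open MeasureTheory ProbabilityTheory

noncomputable section

/-- Discrete (⊤) measurable structure on finsets. -/
instance finsetMeasurableSpace {α : Type*} : MeasurableSpace (Finset α) := ⊤

/-- The law of a perturbation vector in `ℝ^d` with i.i.d. standard exponential components. -/
def expPi (d : ℕ) : Measure (Fin d → ℝ) := Measure.pi fun _ : Fin d => expMeasure 1

namespace HFRAux

open Real Set
open scoped NNReal ENNReal

/- ### The exponential tail integral -/

lemma aux_deriv (c x : ℝ) :
    HasDerivAt (fun y => -((y - c + 1) * Real.exp (-y))) ((x - c) * Real.exp (-x)) x := by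
  have h1 : HasDerivAt (fun y : ℝ => y - c + 1) 1 x := by
    simpa using ((hasDerivAt_id x).sub_const c).add_const 1
  have h2 : HasDerivAt (fun y : ℝ => Real.exp (-y)) (-Real.exp (-x)) x := by
    simpa using ((hasDerivAt_id x).neg).exp
  have := (h1.mul h2).neg
  exact this.congr_deriv (by ring)

lemma aux_tendsto (c : ℝ) :
    Filter.Tendsto (fun y => -((y - c + 1) * Real.exp (-y))) Filter.atTop (nhds 0) := by
  have h1 := tendsto_pow_mul_exp_neg_atTop_nhds_zero 1
  have h2 : Filter.Tendsto (fun y : ℝ => (1 - c) * Real.exp (-y)) Filter.atTop (nhds 0) := by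
    simpa using (Real.tendsto_exp_neg_atTop_nhds_zero).const_mul (1 - c)
  have := ((h1.add h2).neg)
  simp only [neg_zero, add_zero] at this
  convert this using 2 with y
  ring

lemma aux_tail_integral (c : ℝ) :
    ∫ x in Ioi c, (x - c) * Real.exp (-x) = Real.exp (-c) := by
  have := integral_Ioi_of_hasDerivAt_of_nonneg' (g' := fun x => (x - c) * Real.exp (-x))
    (fun x _ => aux_deriv c x)
    (fun x hx => mul_nonneg (by simp at hx; linarith) (Real.exp_pos _).le)
    (aux_tendsto c)
  rw [this]
  simp

lemma aux_tail_integrable (c : ℝ) :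
    IntegrableOn (fun x => (x - c) * Real.exp (-x)) (Ioi c) := by
  exact integrableOn_Ioi_deriv_of_nonneg' (fun x _ => aux_deriv c x)
    (fun x hx => mul_nonneg (by simp at hx; linarith) (Real.exp_pos _).le)
    (aux_tendsto c)

/- ### Integration against the exponential distribution -/

lemma aux_pdfReal (x : ℝ) :
    exponentialPDFReal 1 x = if 0 ≤ x then Real.exp (-x) else 0 := by
  rw [exponentialPDFReal, gammaPDFReal]
  simp [Real.Gamma_one]

lemma aux_pdf_meas : Measurable (fun x => (exponentialPDFReal 1 x).toNNReal) :=
  (measurable_exponentialPDFReal 1).real_toNNReal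

lemma aux_expMeasure_eq :
    expMeasure 1 = (volume : Measure ℝ).withDensity
      (fun x => ((exponentialPDFReal 1 x).toNNReal : ENNReal)) := rfl

lemma aux_indicator_eq (c : ℝ) (hc : 0 ≤ c) :
    (fun x : ℝ => exponentialPDFReal 1 x * max (x - c) 0)
      = Set.indicator (Ioi c) (fun x => (x - c) * Real.exp (-x)) := by
  funext x
  rw [aux_pdfReal]
  by_cases hx : x ∈ Ioi c
  · simp only [Set.indicator_of_mem hx]
    simp only [mem_Ioi] at hx
    rw [if_pos (by linarith), max_eq_left (by linarith)]
    ring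
  · simp only [Set.indicator_of_notMem hx]
    simp only [mem_Ioi, not_lt] at hx
    by_cases h0 : 0 ≤ x
    · rw [if_pos h0, max_eq_right (by linarith)]; ring
    · rw [if_neg h0]; ring

lemma aux_smul_eq (c : ℝ) :
    (fun x : ℝ => ((exponentialPDFReal 1 x).toNNReal : ℝ≥0) • max (x - c) 0)
      = fun x => exponentialPDFReal 1 x * max (x - c) 0 := by
  funext x
  rw [NNReal.smul_def, smul_eq_mul, Real.coe_toNNReal _ (exponentialPDFReal_nonneg one_pos x)]

lemma exp_integral_max (c : ℝ) (hc : 0 ≤ c) :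
    ∫ x, max (x - c) 0 ∂(expMeasure 1) = Real.exp (-c) := by
  rw [aux_expMeasure_eq, integral_withDensity_eq_integral_smul aux_pdf_meas]
  rw [show (fun x : ℝ => ((exponentialPDFReal 1 x).toNNReal : ℝ≥0) • max (x - c) 0)
    = Set.indicator (Ioi c) (fun x => (x - c) * Real.exp (-x)) from
      (aux_smul_eq c).trans (aux_indicator_eq c hc)]
  rw [integral_indicator measurableSet_Ioi]
  exact aux_tail_integral c

lemma exp_integrable_max (c : ℝ) (hc : 0 ≤ c) :
    Integrable (fun x => max (x - c) 0) (expMeasure 1) := by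
  rw [aux_expMeasure_eq, integrable_withDensity_iff_integrable_smul aux_pdf_meas]
  rw [show (fun x : ℝ => ((exponentialPDFReal 1 x).toNNReal : ℝ≥0) • max (x - c) 0)
    = Set.indicator (Ioi c) (fun x => (x - c) * Real.exp (-x)) from
      (aux_smul_eq c).trans (aux_indicator_eq c hc)]
  rw [integrable_indicator_iff measurableSet_Ioi]
  exact aux_tail_integrable c

/- ### Marginals of `expPi` -/

lemma expPi_map_eval (d : ℕ) (i : Fin d) :
    (expPi d).map (Function.eval i) = expMeasure 1 := by
  have hprob : IsProbabilityMeasure (expMeasure 1) := isProbabilityMeasure_expMeasure one_pos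
  ext s hs
  rw [Measure.map_apply (measurable_pi_apply i) hs]
  rw [show (fun f : Fin d → ℝ => f i) ⁻¹' s
      = Set.pi Set.univ (Function.update (fun _ => Set.univ) i s)
    from Set.eval_preimage]
  rw [expPi, Measure.pi_pi]
  rw [Finset.prod_eq_single i]
  · simp
  · intro j _ hji
    rw [Function.update_of_ne hji]
    simp
  · simp

lemma expMeasure_Iio_zero : expMeasure 1 (Iio 0) = 0 := by
  rw [show expMeasure 1 = (volume : Measure ℝ).withDensity (gammaPDF 1 1) from rfl]
  rw [withDensity_apply _ measurableSet_Iio]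
  exact lintegral_gammaPDF_of_nonpos le_rfl

/- ### The be-the-leader argument -/

lemma btl_aux {d N : ℕ} (η : ℝ)
    (ℓ : Fin (N + 1) → Fin d → ℝ) (Z : Fin d → ℝ)
    (St : Finset (Finset (Fin d))) (hne : St.Nonempty)
    (V : Fin (N + 1) → Finset (Fin d))
    (hVmem : ∀ t, V t ∈ St)
    (hVmin : ∀ t, ∀ v ∈ St,
      ∑ i ∈ V t, (η * (∑ s ∈ Finset.Iic t, ℓ s i) - Z i)
        ≤ ∑ i ∈ v, (η * (∑ s ∈ Finset.Iic t, ℓ s i) - Z i)) :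
    ∀ t : Fin (N + 1), ∑ s ∈ Finset.Iic t, (η * ∑ i ∈ V s, ℓ s i)
      ≤ (∑ i ∈ V t, (η * (∑ s ∈ Finset.Iic t, ℓ s i) - Z i))
        + St.sup' hne (fun v => ∑ i ∈ v, Z i) := by
  have hIic0 : Finset.Iic (0 : Fin (N + 1)) = {0} := by
    ext a; simp [Fin.le_zero_iff]
  have hnm : ∀ j : Fin N, j.succ ∉ Finset.Iic j.castSucc := by
    intro j
    simp only [Finset.mem_Iic]
    exact fun h => absurd (Fin.castSucc_lt_succ (i := j)) (not_lt.mpr h)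
  have hIicS : ∀ j : Fin N, Finset.Iic j.succ = insert j.succ (Finset.Iic j.castSucc) := by
    intro j; ext a
    simp only [Finset.mem_Iic, Finset.mem_insert]
    rw [le_iff_lt_or_eq, ← Fin.le_castSucc_iff, or_comm]
  intro t
  induction t using Fin.induction with
  | zero =>
    simp only [hIic0, Finset.sum_singleton]
    rw [Finset.sum_sub_distrib, ← Finset.mul_sum]
    have h2 : ∑ i ∈ V 0, Z i ≤ St.sup' hne (fun v => ∑ i ∈ v, Z i) :=
      Finset.le_sup' (fun v => ∑ i ∈ v, Z i) (hVmem 0)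
    linarith
  | succ j ih =>
    have hsplit : ∀ v : Finset (Fin d),
        ∑ i ∈ v, (η * (∑ s ∈ Finset.Iic j.succ, ℓ s i) - Z i)
        = (∑ i ∈ v, (η * (∑ s ∈ Finset.Iic j.castSucc, ℓ s i) - Z i))
          + η * ∑ i ∈ v, ℓ j.succ i := by
      intro v
      rw [Finset.mul_sum, ← Finset.sum_add_distrib]
      apply Finset.sum_congr rfl
      intro i _
      rw [hIicS j, Finset.sum_insert (hnm j)]
      ring
    rw [hsplit (V j.succ), hIicS j, Finset.sum_insert (hnm j)]
    have h3 := hVmin j.castSucc (V j.succ) (hVmem j.succ)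
    linarith

/- ### Pointwise regret bound -/

lemma pointwise_bound {d m N : ℕ} (hd : 0 < d) (η : ℝ) (hη : 0 < η)
    (S : Finset (Finset (Fin d))) (hm : ∀ v ∈ S, v.card ≤ m)
    (ℓ : Fin (N + 1) → Fin d → ℝ) (Z : Fin d → ℝ) (hZ : ∀ i, 0 ≤ Z i)
    (St : Finset (Finset (Fin d))) (hsub : St ⊆ S) (hne : St.Nonempty)
    (V : Fin (N + 1) → Finset (Fin d)) (hVmem : ∀ t, V t ∈ St)
    (hVmin : ∀ t, ∀ v ∈ St,
      ∑ i ∈ V t, (η * (∑ s ∈ Finset.Iic t, ℓ s i) - Z i)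
        ≤ ∑ i ∈ v, (η * (∑ s ∈ Finset.Iic t, ℓ s i) - Z i))
    (u : Finset (Fin d)) (hu : u ∈ St) :
    ∑ t, ((∑ i ∈ V t, ℓ t i) - ∑ i ∈ u, ℓ t i)
      ≤ (m * (Real.log d + ∑ i, max (Z i - Real.log d) 0)) / η := by
  set c := Real.log d with hc_def
  have hc : 0 ≤ c := Real.log_nonneg (by exact_mod_cast hd)
  set B := c + ∑ i, max (Z i - c) 0 with hB_def
  have hBnn : 0 ≤ B := add_nonneg hc (Finset.sum_nonneg fun i _ => le_max_right _ _)
  have hIicLast : Finset.Iic (Fin.last N) = Finset.univ := by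
    ext a; simp [Fin.le_last]
  have key := btl_aux η ℓ Z St hne V hVmem hVmin (Fin.last N)
  have keyu := hVmin (Fin.last N) u hu
  rw [hIicLast] at key keyu
  -- rewrite Φ_T(u)
  have hPhiU : ∑ i ∈ u, (η * (∑ s, ℓ s i) - Z i)
      = η * (∑ t, ∑ i ∈ u, ℓ t i) - ∑ i ∈ u, Z i := by
    rw [Finset.sum_sub_distrib, ← Finset.mul_sum, Finset.sum_comm]
  -- bound on the sup'
  have hM : St.sup' hne (fun v => ∑ i ∈ v, Z i) ≤ m * B := by
    apply Finset.sup'_le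
    intro v hv
    have h1 : ∀ i ∈ v, Z i ≤ B := by
      intro i _
      have : Z i - c ≤ max (Z i - c) 0 := le_max_left _ _
      have h2 : max (Z i - c) 0 ≤ ∑ j, max (Z j - c) 0 :=
        Finset.single_le_sum (f := fun j => max (Z j - c) 0)
          (fun j _ => le_max_right _ _) (Finset.mem_univ i)
      simp only [hB_def]
      linarith
    calc ∑ i ∈ v, Z i ≤ v.card • B := Finset.sum_le_card_nsmul v Z B h1
    _ = (v.card : ℝ) * B := by rw [nsmul_eq_mul]
    _ ≤ m * B := by
        apply mul_le_mul_of_nonneg_right _ hBnn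
        exact_mod_cast hm v (hsub hv)
  have hZu : 0 ≤ ∑ i ∈ u, Z i := Finset.sum_nonneg fun i _ => hZ i
  -- ∑ over univ of η * ∑_{V t} = η * ∑ ∑
  have hdist : ∑ t, (η * ∑ i ∈ V t, ℓ t i) = η * ∑ t, ∑ i ∈ V t, ℓ t i := by
    rw [Finset.mul_sum]
  rw [hdist] at key
  have hchain : η * ∑ t, ∑ i ∈ V t, ℓ t i
      ≤ η * (∑ t, ∑ i ∈ u, ℓ t i) - ∑ i ∈ u, Z i + St.sup' hne (fun v => ∑ i ∈ v, Z i) := by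
    calc η * ∑ t, ∑ i ∈ V t, ℓ t i
        ≤ ∑ i ∈ V (Fin.last N), (η * (∑ s, ℓ s i) - Z i)
          + St.sup' hne (fun v => ∑ i ∈ v, Z i) := key
      _ ≤ ∑ i ∈ u, (η * (∑ s, ℓ s i) - Z i)
          + St.sup' hne (fun v => ∑ i ∈ v, Z i) := by linarith [keyu]
      _ = _ := by rw [hPhiU]
  rw [le_div_iff₀' hη, Finset.sum_sub_distrib, mul_sub]
  linarith

end HFRAux
/-- **Regret of the hypothetical one-step-lookahead perturbed forecaster (Lemma 1).**
Decision vectors in `{0,1}^d` are encoded by their supports (finsets of coordinates);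
`S` is the decision space, with `‖v‖₁ ≤ m` for all `v ∈ S`. Given any sequence of
(possibly random) loss-estimate vectors `ℓ̂_1, …, ℓ̂_T`, a perturbation `Z̃` with i.i.d.
standard exponential components and a nonempty random decision set `S̃ ⊆ S`, with
`(Z̃, S̃)` independent of the estimates, the hypothetical forecaster
`Ṽ_t = argmin_{v ∈ S̃} vᵀ(η ∑_{s ≤ t} ℓ̂_s - Z̃)` satisfies, for every fixed policy `π`,
`E[∑_t (Ṽ_t - π(S̃))ᵀ ℓ̂_t] ≤ m (log d + 1)/η`. -/
theorem hypothetical_forecaster_regret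
    (d m T : ℕ) (hd : 0 < d)
    (S : Finset (Finset (Fin d))) (hS : S.Nonempty)
    (hm : ∀ v ∈ S, v.card ≤ m)
    (η : ℝ) (hη : 0 < η)
    {Ω : Type*} [MeasurableSpace Ω] (μ : Measure Ω) [IsProbabilityMeasure μ]
    -- the loss estimates
    (lhat : Fin T → Ω → Fin d → ℝ) (hlhatMeas : ∀ t, Measurable (lhat t))
    -- the time-independent perturbation and decision set
    (Ztilde : Ω → Fin d → ℝ) (hZMeas : Measurable Ztilde)
    (hZLaw : μ.map Ztilde = expPi d)
    (Stilde : Ω → Finset (Finset (Fin d))) (hSMeas : Measurable Stilde)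
    (hSsub : ∀ ω, Stilde ω ⊆ S ∧ (Stilde ω).Nonempty)
    -- (Z̃, S̃) is independent of the loss estimates
    (hIndep : IndepFun (fun ω => (Ztilde ω, Stilde ω)) (fun ω t => lhat t ω) μ)
    -- the hypothetical forecaster
    (Vtilde : Fin T → Ω → Finset (Fin d))
    (hVmem : ∀ t ω, Vtilde t ω ∈ Stilde ω)
    (hVmin : ∀ t ω, ∀ v ∈ Stilde ω,
      ∑ i ∈ Vtilde t ω, (η * (∑ s ∈ Finset.Iic t, lhat s ω i) - Ztilde ω i)
        ≤ ∑ i ∈ v, (η * (∑ s ∈ Finset.Iic t, lhat s ω i) - Ztilde ω i))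
    -- a fixed policy
    (π : Finset (Finset (Fin d)) → Finset (Fin d))
    (hπ : ∀ A : Finset (Finset (Fin d)), A.Nonempty → π A ∈ A)
    -- integrability of the relevant quantities
    (hint₁ : ∀ t, Integrable (fun ω => ∑ i ∈ Vtilde t ω, lhat t ω i) μ)
    (hint₂ : ∀ t, Integrable (fun ω => ∑ i ∈ π (Stilde ω), lhat t ω i) μ) :
    ∑ t, ∫ ω, ((∑ i ∈ Vtilde t ω, lhat t ω i) - ∑ i ∈ π (Stilde ω), lhat t ω i) ∂μ
      ≤ (m : ℝ) * (Real.log d + 1) / η := by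
  have hlogd : (0:ℝ) ≤ Real.log d := Real.log_nonneg (by exact_mod_cast hd)
  have hRHS : (0:ℝ) ≤ (m : ℝ) * (Real.log d + 1) / η :=
    div_nonneg (mul_nonneg (Nat.cast_nonneg m) (by linarith)) hη.le
  cases T with
  | zero => simpa using hRHS
  | succ N =>
    set c := Real.log d with hc_def
    have hc : 0 ≤ c := hlogd
    -- the marginal law of each coordinate of Z̃
    have hZi : ∀ i : Fin d, Measurable (fun ω => Ztilde ω i) :=
      fun i => (measurable_pi_apply i).comp hZMeas
    have hmapi : ∀ i : Fin d, μ.map (fun ω => Ztilde ω i) = expMeasure 1 := by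
      intro i
      have h1 : (fun ω => Ztilde ω i) = (Function.eval i) ∘ Ztilde := rfl
      rw [h1, ← Measure.map_map (measurable_pi_apply i) hZMeas, hZLaw,
        HFRAux.expPi_map_eval d i]
    have hfm : ∀ i : Fin d, AEStronglyMeasurable (fun x : ℝ => max (x - c) 0)
        (μ.map (fun ω => Ztilde ω i)) :=
      fun i => (continuous_id.sub continuous_const).max continuous_const
        |>.aestronglyMeasurable
    have hintmax : ∀ i : Fin d, Integrable (fun ω => max (Ztilde ω i - c) 0) μ := by
      intro i
      have := (integrable_map_measure (hfm i) (hZi i).aemeasurable).mp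
        (by rw [hmapi i]; exact HFRAux.exp_integrable_max c hc)
      exact this
    have hintegralmax : ∀ i : Fin d, ∫ ω, max (Ztilde ω i - c) 0 ∂μ = Real.exp (-c) := by
      intro i
      have h1 := integral_map (hZi i).aemeasurable (hfm i)
      rw [hmapi i, HFRAux.exp_integral_max c hc] at h1
      exact h1.symm
    -- Z̃ is a.e. nonnegative
    have hZae : ∀ᵐ ω ∂μ, ∀ i, 0 ≤ Ztilde ω i := by
      rw [ae_all_iff]
      intro i
      have h0 : μ {ω | Ztilde ω i < 0} = 0 := by
        have h1 : {ω | Ztilde ω i < 0} = (fun ω => Ztilde ω i) ⁻¹' (Set.Iio 0) := rfl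
        rw [h1, ← Measure.map_apply (hZi i) measurableSet_Iio, hmapi i]
        exact HFRAux.expMeasure_Iio_zero
      rw [ae_iff]
      convert h0 using 2
      simp [not_le]
    -- the dominating function
    set B : Ω → ℝ := fun ω => ((m : ℝ) * (c + ∑ i, max (Ztilde ω i - c) 0)) / η with hB_def
    have hintB : Integrable B μ := by
      apply Integrable.div_const
      apply Integrable.const_mul
      exact (integrable_const c).add (integrable_finset_sum _ fun i _ => hintmax i)
    have hsum1 : ∑ i : Fin d, ∫ ω, max (Ztilde ω i - c) 0 ∂μ = 1 := by
      simp only [hintegralmax]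
      rw [Finset.sum_const, Finset.card_univ, Fintype.card_fin, nsmul_eq_mul, hc_def,
        Real.exp_neg, Real.exp_log (by exact_mod_cast hd)]
      field_simp
    have hintgB : ∫ ω, B ω ∂μ = (m : ℝ) * (c + 1) / η := by
      simp only [hB_def]
      rw [integral_div, integral_const_mul,
        integral_add (integrable_const c) (integrable_finset_sum _ fun i _ => hintmax i),
        integral_finset_sum _ (fun i _ => hintmax i), integral_const]
      simp only [measure_univ, probReal_univ, ENNReal.toReal_one, smul_eq_mul, one_mul]
      rw [hsum1]
    -- assemble
    have hswap := integral_finset_sum (μ := μ) Finset.univ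
      (f := fun (t : Fin (N+1)) (ω : Ω) =>
        (∑ i ∈ Vtilde t ω, lhat t ω i) - ∑ i ∈ π (Stilde ω), lhat t ω i)
      (fun t _ => (hint₁ t).sub (hint₂ t))
    rw [← hswap]
    have hle : ∀ᵐ ω ∂μ,
        (∑ t, ((∑ i ∈ Vtilde t ω, lhat t ω i) - ∑ i ∈ π (Stilde ω), lhat t ω i)) ≤ B ω := by
      filter_upwards [hZae] with ω hZw
      exact HFRAux.pointwise_bound hd η hη S hm (fun t => lhat t ω) (Ztilde ω) hZw
        (Stilde ω) (hSsub ω).1 (hSsub ω).2 (fun t => Vtilde t ω) (fun t => hVmem t ω)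
        (fun t v hv => hVmin t ω v hv) (π (Stilde ω)) (hπ _ (hSsub ω).2)
    calc ∫ ω, ∑ t, ((∑ i ∈ Vtilde t ω, lhat t ω i) - ∑ i ∈ π (Stilde ω), lhat t ω i) ∂μ
        ≤ ∫ ω, B ω ∂μ := integral_mono_ae
          (integrable_finset_sum _ fun t _ => (hint₁ t).sub (hint₂ t)) hintB hle
      _ = (m : ℝ) * (c + 1) / η := hintgB

end
end

section
/- Fix η > 0, a vector L ∈ ℝ^d, a nonempty random decision set S̃ ⊆ S, a perturbation vector Z̃ ∈ ℝ^d with i.i.d. standard exponential components independent of S̃, and a random nonnegative vector ℓ̂ ∈ ℝ^d_{≥0} independent of Z̃ (given S̃ and the past). Let Ṽ = argmin_{v ∈ S̃} vᵀ(ηL − Z̃) and Ṽ' = argmin_{v ∈ S̃} vᵀ(η(L + ℓ̂) − Z̃). Then E[(Ṽ − Ṽ')ᵀ ℓ̂] ≤ η · E[(Ṽᵀ ℓ̂)²]. -/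
open MeasureTheory ProbabilityTheory

noncomputable section

section Auxiliary

open Real
open scoped ENNReal

theorem lintegral_pi_prod {n : ℕ} (μ : Fin n → Measure ℝ) [∀ i, SigmaFinite (μ i)]
    (g : Fin n → ℝ → ℝ≥0∞) (hg : ∀ i, Measurable (g i)) :
    ∫⁻ z, ∏ i, g i (z i) ∂(Measure.pi μ) = ∏ i, ∫⁻ x, g i x ∂(μ i) := by
  induction n with
  | zero => simp [Measure.pi_of_empty]
  | succ n ih =>
      have hmp := (measurePreserving_piFinSuccAbove μ 0).symm
      calc ∫⁻ z, ∏ i, g i (z i) ∂(Measure.pi μ)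
          = ∫⁻ p : ℝ × (Fin n → ℝ),
              ∏ i, g i ((MeasurableEquiv.piFinSuccAbove (fun _ => ℝ) 0).symm p i)
              ∂((μ 0).prod (Measure.pi fun j => μ ((0 : Fin (n+1)).succAbove j))) := by
            rw [← hmp.map_eq, lintegral_map_equiv]
        _ = ∫⁻ p : ℝ × (Fin n → ℝ), g 0 p.1 * (fun y : Fin n → ℝ => ∏ j : Fin n, g j.succ (y j)) p.2
              ∂((μ 0).prod (Measure.pi fun j => μ ((0 : Fin (n+1)).succAbove j))) := by
            refine lintegral_congr fun p => ?_
            rw [Fin.prod_univ_succ]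
            simp [MeasurableEquiv.piFinSuccAbove_symm_apply, Fin.zero_succAbove]
        _ = (∫⁻ x, g 0 x ∂(μ 0)) * ∫⁻ y, ∏ j : Fin n, g j.succ (y j)
              ∂(Measure.pi fun j => μ ((0 : Fin (n+1)).succAbove j)) := by
            exact lintegral_prod_mul (ν := Measure.pi fun j => μ ((0 : Fin (n+1)).succAbove j))
              (hg 0).aemeasurable
              (Finset.measurable_prod _ fun (j : Fin n) _ =>
                (hg j.succ).comp (measurable_pi_apply j)).aemeasurable
        _ = (∫⁻ x, g 0 x ∂(μ 0)) * ∏ j : Fin n, ∫⁻ x, g j.succ x ∂(μ j.succ) := by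
            simp only [Fin.zero_succAbove]
            rw [ih (fun j => μ j.succ) (fun j => g j.succ) (fun j => hg j.succ)]
        _ = ∏ i, ∫⁻ x, g i x ∂(μ i) :=
            (Fin.prod_univ_succ (fun i => ∫⁻ x, g i x ∂(μ i))).symm

/-- one-dimensional shift bound for the exponential pdf -/
theorem exponentialPDF_shift {t : ℝ} (ht : 0 ≤ t) (x : ℝ) :
    ENNReal.ofReal (rexp (-t)) * exponentialPDF 1 x ≤ exponentialPDF 1 (x + t) := by
  rcases le_or_gt 0 x with hx | hx
  · rw [exponentialPDF_of_nonneg hx, exponentialPDF_of_nonneg (by linarith),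
      ← ENNReal.ofReal_mul (exp_nonneg _)]
    apply ENNReal.ofReal_le_ofReal
    rw [one_mul, one_mul, ← exp_add]
    ring_nf
    exact le_refl _
  · rw [exponentialPDF_of_neg hx, mul_zero]
    exact zero_le

/-- density of the iid exponential vector -/
def expPiDensity (d : ℕ) : (Fin d → ℝ) → ℝ≥0∞ := fun z => ∏ i, exponentialPDF 1 (z i)

theorem measurable_expPiDensity (d : ℕ) : Measurable (expPiDensity d) :=
  Finset.measurable_prod _ fun i _ =>
    (measurable_exponentialPDFReal 1).ennreal_ofReal.comp (measurable_pi_apply i)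

theorem expPi_eq (d : ℕ) : expPi d = volume.withDensity (expPiDensity d) := by
  haveI : IsProbabilityMeasure (expMeasure 1) := isProbabilityMeasure_expMeasure one_pos
  refine (Measure.pi_eq fun s hs => ?_)
  rw [withDensity_apply _ (MeasurableSet.univ_pi hs)]
  have : ∀ z : Fin d → ℝ, (Set.univ.pi s).indicator (expPiDensity d) z
      = ∏ i, (s i).indicator (exponentialPDF 1) (z i) := by
    intro z
    by_cases hz : z ∈ Set.univ.pi s
    · rw [Set.indicator_of_mem hz]
      refine Finset.prod_congr rfl fun i _ => ?_
      rw [Set.indicator_of_mem (hz i (Set.mem_univ i))]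
    · rw [Set.indicator_of_notMem hz]
      obtain ⟨i, hi⟩ : ∃ i, z i ∉ s i := by simpa [Set.mem_pi] using hz
      exact (Finset.prod_eq_zero (Finset.mem_univ i)
        (by rw [Set.indicator_of_notMem hi])).symm
  rw [← lintegral_indicator (MeasurableSet.univ_pi hs), lintegral_congr this, volume_pi,
    lintegral_pi_prod (fun _ => (volume : Measure ℝ)) (fun i => (s i).indicator (exponentialPDF 1)) (fun i => Measurable.indicator (by exact (measurable_exponentialPDFReal 1).ennreal_ofReal) (hs i))]
  refine Finset.prod_congr rfl fun i _ => ?_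
  rw [lintegral_indicator (hs i), show expMeasure 1 = volume.withDensity (exponentialPDF 1) from rfl, withDensity_apply _ (hs i)]

theorem expPiDensity_shift {d : ℕ} {a : Fin d → ℝ} (ha : ∀ i, 0 ≤ a i) (y : Fin d → ℝ) :
    ENNReal.ofReal (rexp (-∑ i, a i)) * expPiDensity d y ≤ expPiDensity d (y + a) := by
  have : ENNReal.ofReal (rexp (-∑ i, a i)) = ∏ i, ENNReal.ofReal (rexp (-a i)) := by
    rw [← ENNReal.ofReal_prod_of_nonneg (fun i _ => (exp_nonneg _)), ← Real.exp_sum,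
      Finset.sum_neg_distrib]
  rw [this, expPiDensity, expPiDensity, ← Finset.prod_mul_distrib]
  exact Finset.prod_le_prod' fun i _ => exponentialPDF_shift (ha i) (y i)

theorem expPi_shift {d : ℕ} {a : Fin d → ℝ} (ha : ∀ i, 0 ≤ a i) {C : Set (Fin d → ℝ)}
    (hC : MeasurableSet C) :
    ENNReal.ofReal (rexp (-∑ i, a i)) * expPi d C ≤ expPi d ((fun z => z - a) ⁻¹' C) := by
  have hsub : Measurable fun z : Fin d → ℝ => z - a := measurable_id.sub measurable_const
  rw [expPi_eq, withDensity_apply _ hC, withDensity_apply _ (hsub hC),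
    ← lintegral_indicator (hsub hC), ← lintegral_indicator hC]
  classical
  have key : ∀ z : Fin d → ℝ, ((fun z => z - a) ⁻¹' C).indicator (expPiDensity d) z
      = C.indicator (fun y => expPiDensity d (y + a)) (z + -a) := by
    intro z
    rw [Set.indicator_apply, Set.indicator_apply]
    simp only [Set.mem_preimage, sub_eq_add_neg, neg_add_cancel_right]
  calc ENNReal.ofReal (rexp (-∑ i, a i)) * ∫⁻ z, C.indicator (expPiDensity d) z ∂volume
      = ∫⁻ z, C.indicator (fun y => ENNReal.ofReal (rexp (-∑ i, a i)) * expPiDensity d y) z ∂volume := by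
        rw [← lintegral_const_mul _ ((measurable_expPiDensity d).indicator hC)]
        refine lintegral_congr fun z => ?_
        rw [Set.indicator_apply, Set.indicator_apply]
        split <;> simp
    _ ≤ ∫⁻ z, C.indicator (fun y => expPiDensity d (y + a)) z ∂volume := by
        refine lintegral_mono fun z => ?_
        rw [Set.indicator_apply, Set.indicator_apply]
        split
        · exact expPiDensity_shift ha z
        · exact le_rfl
    _ = ∫⁻ z, C.indicator (fun y => expPiDensity d (y + a)) (z + -a) ∂volume :=
        (lintegral_add_right_eq_self _ (-a)).symm
    _ = ∫⁻ z, ((fun z => z - a) ⁻¹' C).indicator (expPiDensity d) z ∂volume := by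
        refine lintegral_congr fun z => (key z).symm

/-- level sets of nonzero linear functionals are null for pi-volume -/
theorem volume_levelSet_eq_zero {d : ℕ} (w : Fin d → ℝ) {j : Fin d} (hj : w j ≠ 0) (c : ℝ) :
    (volume : Measure (Fin d → ℝ)) {z | ∑ i, w i * z i = c} = 0 := by
  classical
  set F : (Fin d → ℝ) →ₗ[ℝ] ℝ :=
    { toFun := fun z => ∑ i, w i * z i
      map_add' := by intro x y; simp [mul_add, Finset.sum_add_distrib]
      map_smul' := by intro r x; simp [Finset.mul_sum, mul_left_comm] }
  have hFs : ∀ (t : ℝ), F (t • (Pi.single j 1 : Fin d → ℝ)) = t * w j := by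
    intro t
    simp [F, Pi.single_apply, mul_comm]
  have hFne : F ≠ 0 := by
    intro h
    have := hFs 1
    rw [h] at this
    simp at this
    exact hj this.symm
  set z₀ : Fin d → ℝ := (c / w j) • (Pi.single j 1 : Fin d → ℝ) with hz₀
  have hFz₀ : F z₀ = c := by rw [hz₀, hFs, div_mul_cancel₀ _ hj]
  have hset : {z | ∑ i, w i * z i = c} = (fun z => z + -z₀) ⁻¹' (LinearMap.ker F : Set (Fin d → ℝ)) := by
    ext z
    simp only [Set.mem_setOf_eq, Set.mem_preimage, SetLike.mem_coe, LinearMap.mem_ker, map_add,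
      map_neg, hFz₀]
    constructor
    · intro h; have : F z = c := h; rw [this]; ring
    · intro h
      have : F z - c = 0 := by linarith [h]
      have : F z = c := by linarith
      exact this
  rw [hset, measure_preimage_add_right]
  exact Measure.addHaar_submodule _ _ (by simpa [LinearMap.ker_eq_top] using hFne)

theorem expPi_tie {d : ℕ} {u v : Finset (Fin d)} (huv : u ≠ v) (c : ℝ) :
    expPi d {z | ∑ i ∈ u, z i - ∑ i ∈ v, z i = c} = 0 := by
  classical
  set w : Fin d → ℝ := fun i => (if i ∈ u then (1 : ℝ) else 0) - if i ∈ v then 1 else 0 with hw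
  have hwne : ∃ j, w j ≠ 0 := by
    by_contra h
    push_neg at h
    apply huv
    ext i
    have := h i
    rw [hw] at this
    by_cases hiu : i ∈ u <;> by_cases hiv : i ∈ v <;> simp [hiu, hiv] at this ⊢
  obtain ⟨j, hj⟩ := hwne
  have hset : {z : Fin d → ℝ | ∑ i ∈ u, z i - ∑ i ∈ v, z i = c} = {z | ∑ i, w i * z i = c} := by
    ext z
    simp only [Set.mem_setOf_eq, hw, sub_mul, ite_mul, one_mul, zero_mul,
      Finset.sum_sub_distrib, Finset.sum_ite_mem, Finset.univ_inter]
  rw [hset, expPi_eq]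
  exact withDensity_absolutelyContinuous _ _ (volume_levelSet_eq_zero w hj c)

/-- `v` is the unique strict minimizer of the cost `c` over `s`. -/
def isUMin {d : ℕ} (c : Fin d → ℝ) (s : Finset (Finset (Fin d))) (v : Finset (Fin d)) : Prop :=
  v ∈ s ∧ ∀ u ∈ s, u ≠ v → ∑ i ∈ v, c i < ∑ i ∈ u, c i

theorem measurableSet_isUMin {d : ℕ} {α : Type*} [MeasurableSpace α] {c : α → Fin d → ℝ}
    (hc : Measurable c) {σ : α → Finset (Finset (Fin d))} (hσ : Measurable σ)
    (v : Finset (Fin d)) : MeasurableSet {x | isUMin (c x) (σ x) v} := by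
  classical
  have hs : ∀ (w : Finset (Fin d)), Measurable fun x => ∑ i ∈ w, c x i :=
    fun w => Finset.measurable_sum _ fun i _ => (measurable_pi_apply i).comp hc
  have hrw : {x | isUMin (c x) (σ x) v}
      = ⋃ s : Finset (Finset (Fin d)), (σ ⁻¹' {s}) ∩ {x | isUMin (c x) s v} := by
    ext x
    simp only [Set.mem_iUnion, Set.mem_inter_iff, Set.mem_preimage, Set.mem_singleton_iff,
      Set.mem_setOf_eq]
    exact ⟨fun h => ⟨σ x, rfl, h⟩, fun ⟨s, hsx, h⟩ => hsx ▸ h⟩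
  rw [hrw]
  refine MeasurableSet.iUnion fun s => (hσ trivial).inter ?_
  by_cases hv : v ∈ s
  · have : {x | isUMin (c x) s v}
        = ⋂ u : Finset (Fin d), {x | u ∈ s → u ≠ v → ∑ i ∈ v, c x i < ∑ i ∈ u, c x i} := by
      ext x; simp [isUMin, hv]
    rw [this]
    refine MeasurableSet.iInter fun u => ?_
    by_cases hu : u ∈ s
    · by_cases huv : u = v
      · simp [huv]
      · have : {x | u ∈ s → u ≠ v → ∑ i ∈ v, c x i < ∑ i ∈ u, c x i}
            = {x | ∑ i ∈ v, c x i < ∑ i ∈ u, c x i} := by ext x; simp [hu, huv]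
        rw [this]
        exact measurableSet_lt (hs v) (hs u)
    · simp [hu]
  · have : {x | isUMin (c x) s v} = ∅ := by ext x; simp [isUMin, hv]
    simp [this]

theorem key_ineq {d : ℕ} {η : ℝ} (hη : 0 < η) (L : Fin d → ℝ) (s : Finset (Finset (Fin d)))
    (v : Finset (Fin d)) {ℓ : Fin d → ℝ} (hℓ : ∀ i, 0 ≤ ℓ i) :
    (expPi d {z | isUMin (fun i => η * L i - z i) s v}).toReal
      ≤ (expPi d {z | isUMin (fun i => η * (L i + ℓ i) - z i) s v}).toReal
        + η * (∑ i ∈ v, ℓ i) * (expPi d {z | isUMin (fun i => η * L i - z i) s v}).toReal := by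
  classical
  haveI : IsProbabilityMeasure (expMeasure 1) := isProbabilityMeasure_expMeasure one_pos
  haveI : IsProbabilityMeasure (expPi d) := by unfold expPi; infer_instance
  set a : Fin d → ℝ := fun i => if i ∈ v then η * ℓ i else 0 with haa
  have ha : ∀ i, 0 ≤ a i := by
    intro i; rw [haa]; dsimp only
    split
    · exact mul_nonneg hη.le (hℓ i)
    · exact le_rfl
  have hsum : ∑ i, a i = η * ∑ i ∈ v, ℓ i := by
    rw [haa, Finset.mul_sum]
    simp [Finset.sum_ite_mem]
  set B := {z : Fin d → ℝ | isUMin (fun i => η * L i - z i) s v} with hB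
  set B' := {z : Fin d → ℝ | isUMin (fun i => η * (L i + ℓ i) - z i) s v} with hB'
  have hBm : MeasurableSet B :=
    measurableSet_isUMin (by measurability) measurable_const v
  have hB'm : MeasurableSet B' :=
    measurableSet_isUMin (by measurability) measurable_const v
  have hincl : (fun z => z - a) ⁻¹' B ⊆ B' := by
    intro z hz
    obtain ⟨hvs, hmin⟩ := hz
    refine ⟨hvs, fun u hu huv => ?_⟩
    have h1 : ∑ i ∈ v, (η * (L i + ℓ i) - z i) = ∑ i ∈ v, (η * L i - (z - a) i) := by
      refine Finset.sum_congr rfl fun i hi => ?_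
      simp only [Pi.sub_apply, haa, if_pos hi]
      ring
    have h2 : ∑ i ∈ u, (η * L i - (z - a) i) ≤ ∑ i ∈ u, (η * (L i + ℓ i) - z i) := by
      refine Finset.sum_le_sum fun i hi => ?_
      simp only [Pi.sub_apply, haa]
      split
      · apply le_of_eq; ring
      · nlinarith [hℓ i]
    calc ∑ i ∈ v, (η * (L i + ℓ i) - z i) = ∑ i ∈ v, (η * L i - (z - a) i) := h1
      _ < ∑ i ∈ u, (η * L i - (z - a) i) := hmin u hu huv
      _ ≤ ∑ i ∈ u, (η * (L i + ℓ i) - z i) := h2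
  have hshift : ENNReal.ofReal (rexp (-(η * ∑ i ∈ v, ℓ i))) * expPi d B ≤ expPi d B' := by
    calc ENNReal.ofReal (rexp (-(η * ∑ i ∈ v, ℓ i))) * expPi d B
        = ENNReal.ofReal (rexp (-∑ i, a i)) * expPi d B := by rw [hsum]
      _ ≤ expPi d ((fun z => z - a) ⁻¹' B) := expPi_shift ha hBm
      _ ≤ expPi d B' := measure_mono hincl
  -- pass to real numbers
  set x := η * ∑ i ∈ v, ℓ i with hx
  have hx0 : 0 ≤ x := mul_nonneg hη.le (Finset.sum_nonneg fun i _ => hℓ i)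
  have hBfin : expPi d B ≠ ⊤ := (measure_lt_top _ _).ne
  have hB'fin : expPi d B' ≠ ⊤ := (measure_lt_top _ _).ne
  have hreal : rexp (-x) * (expPi d B).toReal ≤ (expPi d B').toReal := by
    have := ENNReal.toReal_mono hB'fin hshift
    rwa [ENNReal.toReal_mul, ENNReal.toReal_ofReal (exp_nonneg _)] at this
  have hexp : 1 - x ≤ rexp (-x) := by
    have := Real.add_one_le_exp (-x)
    linarith
  nlinarith [ENNReal.toReal_nonneg (a := expPi d B)]

end Auxiliary

/-- **Per-round stability of FPL (Lemma 2).**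
Decision vectors in `{0,1}^d` are encoded by their supports. Fix `η > 0` and a vector
`L ∈ ℝ^d`. Let `S̃ ⊆ S` be a nonempty random decision set, `Z̃` a perturbation vector with
i.i.d. standard exponential components, and `ℓ̂` a random nonnegative vector, with `Z̃`
independent of `(S̃, ℓ̂)`. If `Ṽ = argmin_{v ∈ S̃} vᵀ(η L - Z̃)` and
`Ṽ' = argmin_{v ∈ S̃} vᵀ(η (L + ℓ̂) - Z̃)` (same realization of `Z̃` and `S̃`), then
`E[(Ṽ - Ṽ')ᵀ ℓ̂] ≤ η E[(Ṽᵀ ℓ̂)²]`. -/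
theorem fpl_stability
    (d : ℕ) (S : Finset (Finset (Fin d))) (hS : S.Nonempty)
    (η : ℝ) (hη : 0 < η) (L : Fin d → ℝ)
    {Ω : Type*} [MeasurableSpace Ω] (μ : Measure Ω) [IsProbabilityMeasure μ]
    (Stilde : Ω → Finset (Finset (Fin d))) (hSMeas : Measurable Stilde)
    (hSsub : ∀ ω, Stilde ω ⊆ S ∧ (Stilde ω).Nonempty)
    (Ztilde : Ω → Fin d → ℝ) (hZMeas : Measurable Ztilde)
    (hZLaw : μ.map Ztilde = expPi d)
    (lhat : Ω → Fin d → ℝ) (hlhatMeas : Measurable lhat)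
    (hlhatNonneg : ∀ ω i, 0 ≤ lhat ω i)
    (hIndep : IndepFun Ztilde (fun ω => (Stilde ω, lhat ω)) μ)
    (Vtilde Vtilde' : Ω → Finset (Fin d))
    (hVmem : ∀ ω, Vtilde ω ∈ Stilde ω)
    (hVmin : ∀ ω, ∀ v ∈ Stilde ω,
      ∑ i ∈ Vtilde ω, (η * L i - Ztilde ω i) ≤ ∑ i ∈ v, (η * L i - Ztilde ω i))
    (hV'mem : ∀ ω, Vtilde' ω ∈ Stilde ω)
    (hV'min : ∀ ω, ∀ v ∈ Stilde ω,
      ∑ i ∈ Vtilde' ω, (η * (L i + lhat ω i) - Ztilde ω i)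
        ≤ ∑ i ∈ v, (η * (L i + lhat ω i) - Ztilde ω i))
    (hint₁ : Integrable (fun ω => (∑ i ∈ Vtilde ω, lhat ω i) - ∑ i ∈ Vtilde' ω, lhat ω i) μ)
    (hint₂ : Integrable (fun ω => (∑ i ∈ Vtilde ω, lhat ω i) ^ 2) μ) :
    ∫ ω, ((∑ i ∈ Vtilde ω, lhat ω i) - ∑ i ∈ Vtilde' ω, lhat ω i) ∂μ
      ≤ η * ∫ ω, (∑ i ∈ Vtilde ω, lhat ω i) ^ 2 ∂μ := by
  classical
  haveI : IsProbabilityMeasure (expMeasure 1) := isProbabilityMeasure_expMeasure one_pos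
  haveI : IsProbabilityMeasure (expPi d) := by unfold expPi; infer_instance
  -- notation
  set X : Ω → ℝ := fun ω => ∑ i ∈ Vtilde ω, lhat ω i with hXdef
  set X' : Ω → ℝ := fun ω => ∑ i ∈ Vtilde' ω, lhat ω i with hX'def
  set W : Ω → Finset (Finset (Fin d)) × (Fin d → ℝ) := fun ω => (Stilde ω, lhat ω) with hWdef
  have hW : Measurable W := hSMeas.prodMk hlhatMeas
  set J : Ω → (Fin d → ℝ) × (Finset (Finset (Fin d)) × (Fin d → ℝ)) :=
    fun ω => (Ztilde ω, W ω) with hJdef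
  have hJ : Measurable J := hZMeas.prodMk hW
  set κ : Measure (Finset (Finset (Fin d)) × (Fin d → ℝ)) := μ.map W with hκdef
  haveI : IsProbabilityMeasure κ := Measure.isProbabilityMeasure_map hW.aemeasurable
  have hmap : μ.map J = (expPi d).prod κ := by
    rw [hκdef, ← hZLaw]
    exact (indepFun_iff_map_prod_eq_prod_map_map hZMeas.aemeasurable hW.aemeasurable).mp hIndep
  -- the good events
  set B : Finset (Fin d) → Set Ω :=
    fun v => {ω | isUMin (fun i => η * L i - Ztilde ω i) (Stilde ω) v} with hBdef
  set B' : Finset (Fin d) → Set Ω :=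
    fun v => {ω | isUMin (fun i => η * (L i + lhat ω i) - Ztilde ω i) (Stilde ω) v} with hB'def
  have hc₀ : Measurable fun ω => (fun i => η * L i - Ztilde ω i) :=
    measurable_pi_lambda _ fun i => measurable_const.sub ((measurable_pi_apply i).comp hZMeas)
  have hc₁ : Measurable fun ω => (fun i => η * (L i + lhat ω i) - Ztilde ω i) :=
    measurable_pi_lambda _ fun i =>
      (measurable_const.mul (measurable_const.add ((measurable_pi_apply i).comp hlhatMeas))).sub
        ((measurable_pi_apply i).comp hZMeas)
  have hBm : ∀ v, MeasurableSet (B v) := fun v => measurableSet_isUMin hc₀ hSMeas v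
  have hB'm : ∀ v, MeasurableSet (B' v) := fun v => measurableSet_isUMin hc₁ hSMeas v
  have hBsub : ∀ v ω, ω ∈ B v → Vtilde ω = v := by
    intro v ω hω
    obtain ⟨hvs, hmin⟩ := hω
    by_contra hne
    exact absurd (hVmin ω v hvs) (not_le.mpr (hmin (Vtilde ω) (hVmem ω) hne))
  have hB'sub : ∀ v ω, ω ∈ B' v → Vtilde' ω = v := by
    intro v ω hω
    obtain ⟨hvs, hmin⟩ := hω
    by_contra hne
    exact absurd (hV'min ω v hvs) (not_le.mpr (hmin (Vtilde' ω) (hV'mem ω) hne))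
  -- almost everywhere there are no ties, hence the minimizers fall in the good events
  have hae : ∀ᵐ ω ∂μ, ω ∈ B (Vtilde ω) ∧ ω ∈ B' (Vtilde' ω) := by
    have hties : ∀ᵐ ω ∂μ, ∀ u : Finset (Fin d), ∀ v : Finset (Fin d), u ≠ v →
        (∑ i ∈ u, (η * L i - Ztilde ω i) ≠ ∑ i ∈ v, (η * L i - Ztilde ω i)) ∧
        (∑ i ∈ u, (η * (L i + lhat ω i) - Ztilde ω i)
          ≠ ∑ i ∈ v, (η * (L i + lhat ω i) - Ztilde ω i)) := by
      rw [ae_all_iff]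
      intro u
      rw [ae_all_iff]
      intro v
      by_cases huv : u = v
      · simp [huv]
      refine Filter.Eventually.mono ?_ (fun ω h _ => h)
      have h0 : ∀ᵐ ω ∂μ,
          ∑ i ∈ u, (η * L i - Ztilde ω i) ≠ ∑ i ∈ v, (η * L i - Ztilde ω i) := by
        have hEm : MeasurableSet {z : Fin d → ℝ |
            ∑ i ∈ u, z i - ∑ i ∈ v, z i = (∑ i ∈ u, η * L i) - ∑ i ∈ v, η * L i} :=
          measurableSet_eq_fun
            ((Finset.measurable_sum _ fun i _ => measurable_pi_apply i).sub
              (Finset.measurable_sum _ fun i _ => measurable_pi_apply i)) measurable_const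
        have hz : μ (Ztilde ⁻¹' {z : Fin d → ℝ |
            ∑ i ∈ u, z i - ∑ i ∈ v, z i = (∑ i ∈ u, η * L i) - ∑ i ∈ v, η * L i}) = 0 := by
          rw [← Measure.map_apply hZMeas hEm, hZLaw]
          exact expPi_tie huv _
        rw [ae_iff]
        convert hz using 2
        ext ω
        simp only [Set.mem_setOf_eq, Set.mem_preimage, not_not, Finset.sum_sub_distrib]
        constructor
        · intro h; linarith [h]
        · intro h; linarith [h]
      have h1 : ∀ᵐ ω ∂μ,
          ∑ i ∈ u, (η * (L i + lhat ω i) - Ztilde ω i)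
            ≠ ∑ i ∈ v, (η * (L i + lhat ω i) - Ztilde ω i) := by
        set E : Set ((Fin d → ℝ) × (Finset (Finset (Fin d)) × (Fin d → ℝ))) :=
          {p | ∑ i ∈ u, p.1 i - ∑ i ∈ v, p.1 i
            = (∑ i ∈ u, η * (L i + p.2.2 i)) - ∑ i ∈ v, η * (L i + p.2.2 i)} with hEdef
        have hEm : MeasurableSet E := by
          refine measurableSet_eq_fun ?_ ?_
          · exact (Finset.measurable_sum _ fun i _ =>
              (measurable_pi_apply i).comp measurable_fst).sub
              (Finset.measurable_sum _ fun i _ => (measurable_pi_apply i).comp measurable_fst)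
          · exact (Finset.measurable_sum _ fun i _ => measurable_const.mul
              (measurable_const.add ((measurable_pi_apply i).comp
                (measurable_snd.comp measurable_snd)))).sub
              (Finset.measurable_sum _ fun i _ => measurable_const.mul
              (measurable_const.add ((measurable_pi_apply i).comp
                (measurable_snd.comp measurable_snd))))
        have hE0 : ((expPi d).prod κ) E = 0 := by
          rw [Measure.prod_apply_symm hEm]
          have : ∀ w : Finset (Finset (Fin d)) × (Fin d → ℝ),
              expPi d ((fun z => (z, w)) ⁻¹' E) = 0 := by
            intro w
            have : ((fun z => (z, w)) ⁻¹' E) = {z : Fin d → ℝ | ∑ i ∈ u, z i - ∑ i ∈ v, z i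
                = (∑ i ∈ u, η * (L i + w.2 i)) - ∑ i ∈ v, η * (L i + w.2 i)} := rfl
            rw [this]
            exact expPi_tie huv _
          simp [this]
        have hz : μ (J ⁻¹' E) = 0 := by
          rw [← Measure.map_apply hJ hEm, hmap]
          exact hE0
        rw [ae_iff]
        convert hz using 2
        ext ω
        simp only [Set.mem_setOf_eq, Set.mem_preimage, not_not, hEdef, hJdef, hWdef,
          Finset.sum_sub_distrib]
        constructor
        · intro h; linarith [h]
        · intro h; linarith [h]
      exact h0.and h1
    refine Filter.Eventually.mono hties ?_
    intro ω hω
    constructor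
    · refine ⟨hVmem ω, fun u hu hne => ?_⟩
      refine lt_of_le_of_ne (hVmin ω u hu) ?_
      exact (hω (Vtilde ω) u (fun h => hne h.symm)).1
    · refine ⟨hV'mem ω, fun u hu hne => ?_⟩
      refine lt_of_le_of_ne (hV'min ω u hu) ?_
      exact (hω (Vtilde' ω) u (fun h => hne h.symm)).2
  -- measurable summands
  set f : Finset (Fin d) → Ω → ℝ :=
    fun v => (B v).indicator (fun ω => ∑ i ∈ v, lhat ω i) with hfdef
  set f' : Finset (Fin d) → Ω → ℝ :=
    fun v => (B' v).indicator (fun ω => ∑ i ∈ v, lhat ω i) with hf'def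
  set q : Finset (Fin d) → Ω → ℝ :=
    fun v => (B v).indicator (fun ω => (∑ i ∈ v, lhat ω i) ^ 2) with hqdef
  have hfX : ∀ v, f v = (B v).indicator X := by
    intro v
    funext ω
    by_cases hω : ω ∈ B v
    · rw [hfdef]
      simp only [Set.indicator_of_mem hω, hXdef, hBsub v ω hω]
    · rw [hfdef]
      simp only [Set.indicator_of_notMem hω]
  have hf'X : ∀ v, f' v = (B' v).indicator X' := by
    intro v
    funext ω
    by_cases hω : ω ∈ B' v
    · rw [hf'def]
      simp only [Set.indicator_of_mem hω, hX'def, hB'sub v ω hω]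
    · rw [hf'def]
      simp only [Set.indicator_of_notMem hω]
  have hqX : ∀ v, q v = (B v).indicator (fun ω => X ω ^ 2) := by
    intro v
    funext ω
    by_cases hω : ω ∈ B v
    · rw [hqdef]
      simp only [Set.indicator_of_mem hω, hXdef, hBsub v ω hω]
    · rw [hqdef]
      simp only [Set.indicator_of_notMem hω]
  -- a.e. decomposition of X, X', X², as sums over S
  have hdecompX : ∀ᵐ ω ∂μ, X ω = ∑ v ∈ S, f v ω := by
    refine Filter.Eventually.mono hae ?_
    intro ω hω
    rw [Finset.sum_eq_single_of_mem (Vtilde ω) ((hSsub ω).1 (hVmem ω))]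
    · rw [hfdef]
      simp only [Set.indicator_of_mem hω.1, hXdef]
    · intro v hv hne
      rw [hfdef]
      have hnm : ω ∉ B v := fun h => hne (hBsub v ω h).symm
      simp only [Set.indicator_of_notMem hnm]
  have hdecompX' : ∀ᵐ ω ∂μ, X' ω = ∑ v ∈ S, f' v ω := by
    refine Filter.Eventually.mono hae ?_
    intro ω hω
    rw [Finset.sum_eq_single_of_mem (Vtilde' ω) ((hSsub ω).1 (hV'mem ω))]
    · rw [hf'def]
      simp only [Set.indicator_of_mem hω.2, hX'def]
    · intro v hv hne
      rw [hf'def]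
      have hnm : ω ∉ B' v := fun h => hne (hB'sub v ω h).symm
      simp only [Set.indicator_of_notMem hnm]
  have hdecompQ : ∀ᵐ ω ∂μ, X ω ^ 2 = ∑ v ∈ S, q v ω := by
    refine Filter.Eventually.mono hae ?_
    intro ω hω
    rw [Finset.sum_eq_single_of_mem (Vtilde ω) ((hSsub ω).1 (hVmem ω))]
    · rw [hqdef]
      simp only [Set.indicator_of_mem hω.1, hXdef]
    · intro v hv hne
      rw [hqdef]
      have hnm : ω ∉ B v := fun h => hne (hBsub v ω h).symm
      simp only [Set.indicator_of_notMem hnm]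
  -- integrability
  have hfmeas : ∀ v, Measurable (f v) := fun v =>
    (Finset.measurable_sum _ fun i _ => (measurable_pi_apply i).comp hlhatMeas).indicator (hBm v)
  have hf'meas : ∀ v, Measurable (f' v) := fun v =>
    (Finset.measurable_sum _ fun i _ => (measurable_pi_apply i).comp hlhatMeas).indicator (hB'm v)
  have hqmeas : ∀ v, Measurable (q v) := fun v =>
    ((Finset.measurable_sum _ fun i _ => (measurable_pi_apply i).comp hlhatMeas).pow
      measurable_const).indicator (hBm v)
  have hgInt : Integrable (fun ω => ∑ v ∈ S, f v ω) μ := by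
    refine Integrable.mono' ((integrable_const (1:ℝ)).add hint₂ |>.div_const 2)
      (Finset.measurable_sum S fun v _ => hfmeas v).aestronglyMeasurable ?_
    refine Filter.Eventually.mono hdecompX ?_
    intro ω hω
    rw [← hω]
    have : |X ω| ≤ (1 + X ω ^ 2) / 2 := by nlinarith [sq_nonneg (|X ω| - 1), sq_abs (X ω)]
    simpa [Real.norm_eq_abs, hXdef] using this
  have hX : Integrable X μ := hgInt.congr (hdecompX.mono fun ω h => h.symm)
  have hX' : Integrable X' μ := by
    have : Integrable (fun ω => X ω - (X ω - X' ω)) μ := hX.sub hint₁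
    refine this.congr (Filter.Eventually.of_forall fun ω => by ring)
  have hfInt : ∀ v, Integrable (f v) μ := by
    intro v
    rw [hfX v]
    exact hX.indicator (hBm v)
  have hf'Int : ∀ v, Integrable (f' v) μ := by
    intro v
    rw [hf'X v]
    exact hX'.indicator (hB'm v)
  have hqInt : ∀ v, Integrable (q v) μ := by
    intro v
    rw [hqX v]
    exact hint₂.indicator (hBm v)
  -- integral decompositions
  have hIX : ∫ ω, X ω ∂μ = ∑ v ∈ S, ∫ ω, f v ω ∂μ := by
    rw [integral_congr_ae hdecompX, integral_finset_sum S fun v _ => hfInt v]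
  have hIX' : ∫ ω, X' ω ∂μ = ∑ v ∈ S, ∫ ω, f' v ω ∂μ := by
    rw [integral_congr_ae hdecompX', integral_finset_sum S fun v _ => hf'Int v]
  have hIQ : ∫ ω, X ω ^ 2 ∂μ = ∑ v ∈ S, ∫ ω, q v ω ∂μ := by
    rw [integral_congr_ae hdecompQ, integral_finset_sum S fun v _ => hqInt v]
  -- nonnegativity of the loss coordinate, κ-a.e.
  have hGm : MeasurableSet {w : Finset (Finset (Fin d)) × (Fin d → ℝ) | ∀ i, 0 ≤ w.2 i} := by
    have hrw : {w : Finset (Finset (Fin d)) × (Fin d → ℝ) | ∀ i, 0 ≤ w.2 i}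
        = ⋂ i, {w : Finset (Finset (Fin d)) × (Fin d → ℝ) | 0 ≤ w.2 i} := by ext; simp
    rw [hrw]
    exact MeasurableSet.iInter fun i =>
      measurableSet_le measurable_const (by fun_prop)
  have hκpos : ∀ᵐ w ∂κ, ∀ i, 0 ≤ w.2 i := by
    rw [hκdef, ae_map_iff hW.aemeasurable hGm]
    exact Filter.Eventually.of_forall fun ω i => hlhatNonneg ω i
  -- the per-summand inequality, via the product representation
  have hvIneq : ∀ v ∈ S, ∫ ω, f v ω ∂μ ≤ ∫ ω, f' v ω ∂μ + η * ∫ ω, q v ω ∂μ := by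
    intro v hv
    -- functions on the product space
    set Φ : (Fin d → ℝ) × (Finset (Finset (Fin d)) × (Fin d → ℝ)) → ℝ := fun p =>
      Set.indicator {p : (Fin d → ℝ) × (Finset (Finset (Fin d)) × (Fin d → ℝ)) |
        isUMin (fun i => η * L i - p.1 i) p.2.1 v} (fun p => ∑ i ∈ v, p.2.2 i) p with hΦdef
    set Φ' : (Fin d → ℝ) × (Finset (Finset (Fin d)) × (Fin d → ℝ)) → ℝ := fun p =>
      Set.indicator {p : (Fin d → ℝ) × (Finset (Finset (Fin d)) × (Fin d → ℝ)) |
        isUMin (fun i => η * (L i + p.2.2 i) - p.1 i) p.2.1 v}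
        (fun p => ∑ i ∈ v, p.2.2 i) p with hΦ'def
    set Ψ : (Fin d → ℝ) × (Finset (Finset (Fin d)) × (Fin d → ℝ)) → ℝ := fun p =>
      Set.indicator {p : (Fin d → ℝ) × (Finset (Finset (Fin d)) × (Fin d → ℝ)) |
        isUMin (fun i => η * L i - p.1 i) p.2.1 v}
        (fun p => (∑ i ∈ v, p.2.2 i) ^ 2) p with hΨdef
    have hcP₀ : Measurable fun p : (Fin d → ℝ) × (Finset (Finset (Fin d)) × (Fin d → ℝ)) =>
        (fun i => η * L i - p.1 i) :=
      measurable_pi_lambda _ fun i =>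
        measurable_const.sub ((measurable_pi_apply i).comp measurable_fst)
    have hcP₁ : Measurable fun p : (Fin d → ℝ) × (Finset (Finset (Fin d)) × (Fin d → ℝ)) =>
        (fun i => η * (L i + p.2.2 i) - p.1 i) :=
      measurable_pi_lambda _ fun i =>
        (measurable_const.mul (measurable_const.add
          ((measurable_pi_apply i).comp (measurable_snd.comp measurable_snd)))).sub
          ((measurable_pi_apply i).comp measurable_fst)
    have hσP : Measurable fun p : (Fin d → ℝ) × (Finset (Finset (Fin d)) × (Fin d → ℝ)) =>
        p.2.1 := measurable_fst.comp measurable_snd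
    have hval : Measurable fun p : (Fin d → ℝ) × (Finset (Finset (Fin d)) × (Fin d → ℝ)) =>
        ∑ i ∈ v, p.2.2 i :=
      Finset.measurable_sum _ fun i _ =>
        (measurable_pi_apply i).comp (measurable_snd.comp measurable_snd)
    have hΦm : Measurable Φ := hval.indicator (measurableSet_isUMin hcP₀ hσP v)
    have hΦ'm : Measurable Φ' := hval.indicator (measurableSet_isUMin hcP₁ hσP v)
    have hΨm : Measurable Ψ :=
      (hval.pow measurable_const).indicator (measurableSet_isUMin hcP₀ hσP v)
    -- compositions with J
    have hΦcomp : ∀ ω, Φ (J ω) = f v ω := fun ω => rfl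
    have hΦ'comp : ∀ ω, Φ' (J ω) = f' v ω := fun ω => rfl
    have hΨcomp : ∀ ω, Ψ (J ω) = q v ω := fun ω => rfl
    -- integrability on the product space
    have hΦInt : Integrable Φ ((expPi d).prod κ) := by
      rw [← hmap]
      exact (integrable_map_measure hΦm.aestronglyMeasurable hJ.aemeasurable).mpr
        ((hfInt v).congr (Filter.Eventually.of_forall fun ω => (hΦcomp ω).symm))
    have hΦ'Int : Integrable Φ' ((expPi d).prod κ) := by
      rw [← hmap]
      exact (integrable_map_measure hΦ'm.aestronglyMeasurable hJ.aemeasurable).mpr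
        ((hf'Int v).congr (Filter.Eventually.of_forall fun ω => (hΦ'comp ω).symm))
    have hΨInt : Integrable Ψ ((expPi d).prod κ) := by
      rw [← hmap]
      exact (integrable_map_measure hΨm.aestronglyMeasurable hJ.aemeasurable).mpr
        ((hqInt v).congr (Filter.Eventually.of_forall fun ω => (hΨcomp ω).symm))
    -- transfer the integrals
    have hTf : ∫ ω, f v ω ∂μ = ∫ p, Φ p ∂((expPi d).prod κ) := by
      rw [← hmap, integral_map hJ.aemeasurable hΦm.aestronglyMeasurable]
      exact integral_congr_ae (Filter.Eventually.of_forall fun ω => (hΦcomp ω).symm)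
    have hTf' : ∫ ω, f' v ω ∂μ = ∫ p, Φ' p ∂((expPi d).prod κ) := by
      rw [← hmap, integral_map hJ.aemeasurable hΦ'm.aestronglyMeasurable]
      exact integral_congr_ae (Filter.Eventually.of_forall fun ω => (hΦ'comp ω).symm)
    have hTq : ∫ ω, q v ω ∂μ = ∫ p, Ψ p ∂((expPi d).prod κ) := by
      rw [← hmap, integral_map hJ.aemeasurable hΨm.aestronglyMeasurable]
      exact integral_congr_ae (Filter.Eventually.of_forall fun ω => (hΨcomp ω).symm)
    -- inner integrals
    have hinnerΦ : ∀ w, ∫ z, Φ (z, w) ∂(expPi d)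
        = (expPi d {z | isUMin (fun i => η * L i - z i) w.1 v}).toReal * (∑ i ∈ v, w.2 i) := by
      intro w
      have hrw : (fun z => Φ (z, w)) = Set.indicator
          {z : Fin d → ℝ | isUMin (fun i => η * L i - z i) w.1 v}
          (fun _ => ∑ i ∈ v, w.2 i) := by
        funext z
        by_cases h : isUMin (fun i => η * L i - z i) w.1 v
        · simp only [hΦdef]
          rw [Set.indicator_of_mem (by exact h), Set.indicator_of_mem (by exact h)]
        · simp only [hΦdef]
          rw [Set.indicator_of_notMem (by exact h), Set.indicator_of_notMem (by exact h)]
      rw [hrw, integral_indicator_const _ (s := {z : Fin d → ℝ | isUMin (fun i => η * L i - z i) w.1 v}) (measurableSet_isUMin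
        (measurable_pi_lambda _ fun i => measurable_const.sub (measurable_pi_apply i))
        measurable_const v), smul_eq_mul, measureReal_def]
    have hinnerΦ' : ∀ w, ∫ z, Φ' (z, w) ∂(expPi d)
        = (expPi d {z | isUMin (fun i => η * (L i + w.2 i) - z i) w.1 v}).toReal
          * (∑ i ∈ v, w.2 i) := by
      intro w
      have hrw : (fun z => Φ' (z, w)) = Set.indicator
          {z : Fin d → ℝ | isUMin (fun i => η * (L i + w.2 i) - z i) w.1 v}
          (fun _ => ∑ i ∈ v, w.2 i) := by
        funext z
        by_cases h : isUMin (fun i => η * (L i + w.2 i) - z i) w.1 v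
        · simp only [hΦ'def]
          rw [Set.indicator_of_mem (by exact h), Set.indicator_of_mem (by exact h)]
        · simp only [hΦ'def]
          rw [Set.indicator_of_notMem (by exact h), Set.indicator_of_notMem (by exact h)]
      rw [hrw, integral_indicator_const _ (s := {z : Fin d → ℝ | isUMin (fun i => η * (L i + w.2 i) - z i) w.1 v}) (measurableSet_isUMin
        (measurable_pi_lambda _ fun i => measurable_const.sub (measurable_pi_apply i))
        measurable_const v), smul_eq_mul, measureReal_def]
    have hinnerΨ : ∀ w, ∫ z, Ψ (z, w) ∂(expPi d)
        = (expPi d {z | isUMin (fun i => η * L i - z i) w.1 v}).toReal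
          * (∑ i ∈ v, w.2 i) ^ 2 := by
      intro w
      have hrw : (fun z => Ψ (z, w)) = Set.indicator
          {z : Fin d → ℝ | isUMin (fun i => η * L i - z i) w.1 v}
          (fun _ => (∑ i ∈ v, w.2 i) ^ 2) := by
        funext z
        by_cases h : isUMin (fun i => η * L i - z i) w.1 v
        · simp only [hΨdef]
          rw [Set.indicator_of_mem (by exact h), Set.indicator_of_mem (by exact h)]
        · simp only [hΨdef]
          rw [Set.indicator_of_notMem (by exact h), Set.indicator_of_notMem (by exact h)]
      rw [hrw, integral_indicator_const _ (s := {z : Fin d → ℝ | isUMin (fun i => η * L i - z i) w.1 v}) (measurableSet_isUMin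
        (measurable_pi_lambda _ fun i => measurable_const.sub (measurable_pi_apply i))
        measurable_const v), smul_eq_mul, measureReal_def]
    -- compare the iterated integrals
    have hG1Int : Integrable (fun w => ∫ z, Φ (z, w) ∂(expPi d)) κ := hΦInt.integral_prod_right
    have hG2Int : Integrable (fun w => ∫ z, Φ' (z, w) ∂(expPi d)) κ := hΦ'Int.integral_prod_right
    have hG3Int : Integrable (fun w => ∫ z, Ψ (z, w) ∂(expPi d)) κ := hΨInt.integral_prod_right
    have hptwise : ∀ᵐ w ∂κ, (fun w => ∫ z, Φ (z, w) ∂(expPi d)) w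
        ≤ (fun w => (∫ z, Φ' (z, w) ∂(expPi d)) + η * ∫ z, Ψ (z, w) ∂(expPi d)) w := by
      refine Filter.Eventually.mono hκpos ?_
      intro w hw
      simp only [hinnerΦ, hinnerΦ', hinnerΨ]
      have hkey := key_ineq hη L w.1 v hw
      have hc0 : (0:ℝ) ≤ ∑ i ∈ v, w.2 i := Finset.sum_nonneg fun i _ => hw i
      nlinarith [ENNReal.toReal_nonneg
        (a := expPi d {z | isUMin (fun i => η * L i - z i) w.1 v}),
        ENNReal.toReal_nonneg
        (a := expPi d {z | isUMin (fun i => η * (L i + w.2 i) - z i) w.1 v})]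
    calc ∫ ω, f v ω ∂μ = ∫ p, Φ p ∂((expPi d).prod κ) := hTf
      _ = ∫ w, ∫ z, Φ (z, w) ∂(expPi d) ∂κ := integral_prod_symm _ hΦInt
      _ ≤ ∫ w, ((∫ z, Φ' (z, w) ∂(expPi d)) + η * ∫ z, Ψ (z, w) ∂(expPi d)) ∂κ :=
          integral_mono_ae hG1Int (hG2Int.add (hG3Int.const_mul η)) hptwise
      _ = (∫ w, ∫ z, Φ' (z, w) ∂(expPi d) ∂κ) + η * ∫ w, ∫ z, Ψ (z, w) ∂(expPi d) ∂κ := by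
          rw [integral_add hG2Int (hG3Int.const_mul η), integral_const_mul]
      _ = ∫ ω, f' v ω ∂μ + η * ∫ ω, q v ω ∂μ := by
          rw [hTf', hTq, integral_prod_symm _ hΦ'Int, integral_prod_symm _ hΨInt]
  -- conclusion
  have hfinal : ∫ ω, (X ω - X' ω) ∂μ ≤ η * ∫ ω, X ω ^ 2 ∂μ := by
    rw [integral_sub hX hX', hIX, hIX', hIQ, ← Finset.sum_sub_distrib, Finset.mul_sum]
    refine Finset.sum_le_sum fun v hv => ?_
    have := hvIneq v hv
    linarith
  exact hfinal

end
end
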